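/- Let t ∈ ℝ and let K : ℝ → ℝ be continuous with K(x) = 0 for all x < 0, |K(x)| ≤ C e^{x/2} for all x ≥ 0 (some constant C), and suppose that for all complex z with Im(z) > 1/2, ∫₀^∞ K(x) e^{izx} dx = exp(−2θ ξ′(s)/ξ(s)) with s = 1/2 − iz, where θ > 0 and ξ is the Riemann xi function. Then for every f ∈ L²((−∞, t)) and every complex z with Im(z) > 1/2: the function x ↦ ∫_{−∞}^t K(x+y) f(y) dy is defined for all x, vanishes for x < −t, satisfies a bound O(e^{x/2}) as x → +∞, and ∫_{−t}^∞ (∫_{−∞}^t K(x+y) f(y) dy) e^{izx} dx = exp(−2θ ξ′(s)/ξ(s)) · ∫_{−∞}^t f(y) e^{−izy} dy, all integrals converging absolutely. -/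

import Mathlib

open MeasureTheory Set Filter

/-- The Riemann xi function `ξ(s) = (1/2) s (s-1) π^{-s/2} Γ(s/2) ζ(s)`. -/
noncomputable def xi (s : ℂ) : ℂ :=
  (1/2) * s * (s - 1) * (Real.pi : ℂ) ^ (-s / 2) * Complex.Gamma (s / 2) * riemannZeta s

set_option maxHeartbeats 1000000 in
/-- for `f ∈ L²((-∞,t))` the function `(K[t]f)(x) = ∫_{-∞}^t K(x+y)f(y)dy`
is defined everywhere, vanishes for `x < -t`, is `O(e^{x/2})`, and its Fourier transform
satisfies `(F K f)(z) = exp(-2θ ξ'/ξ(s)) (F f)(-z)` for `Im z > 1/2`, `s = 1/2 - iz`,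
all integrals converging absolutely. -/
theorem statement14 (t θ C : ℝ) (hθ : 0 < θ) (K : ℝ → ℝ)
    (hKc : Continuous K)
    (hK0 : ∀ x < (0:ℝ), K x = 0)
    (hKb : ∀ x ≥ (0:ℝ), |K x| ≤ C * Real.exp (x / 2))
    (hFT : ∀ z : ℂ, 1/2 < z.im →
      ∫ x in Ioi (0:ℝ), (K x : ℂ) * Complex.exp (Complex.I * z * x)
        = Complex.exp (-2 * θ *
            (deriv xi (1/2 - Complex.I * z) / xi (1/2 - Complex.I * z)))) :
    ∀ f : ℝ → ℝ, MemLp f 2 (volume.restrict (Iio t)) →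
      (∀ x : ℝ, IntegrableOn (fun y => K (x + y) * f y) (Iio t)) ∧
      (∀ x < -t, (∫ y in Iio t, K (x + y) * f y) = 0) ∧
      (∃ C' : ℝ, ∀ x : ℝ, |∫ y in Iio t, K (x + y) * f y| ≤ C' * Real.exp (x / 2)) ∧
      (∀ z : ℂ, 1/2 < z.im →
        IntegrableOn (fun x : ℝ =>
          ((∫ y in Iio t, K (x + y) * f y : ℝ) : ℂ) * Complex.exp (Complex.I * z * x))
          (Ioi (-t)) ∧
        Integrable (fun y : ℝ => (f y : ℂ) * Complex.exp (-Complex.I * z * y))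
          (volume.restrict (Iio t)) ∧
        ∫ x in Ioi (-t),
            ((∫ y in Iio t, K (x + y) * f y : ℝ) : ℂ) * Complex.exp (Complex.I * z * x)
          = Complex.exp (-2 * θ *
              (deriv xi (1/2 - Complex.I * z) / xi (1/2 - Complex.I * z))) *
            ∫ y in Iio t, (f y : ℂ) * Complex.exp (-Complex.I * z * y)) := by
  intro f hf
  have hC : 0 ≤ C := le_trans (abs_nonneg (K 0)) (by simpa using hKb 0 le_rfl)
  -- K vanishes at 0 by continuity
  have hK00 : K 0 = 0 := by
    have h1 : Tendsto K (nhdsWithin 0 (Iio 0)) (nhds (K 0)) :=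
      (hKc.tendsto 0).mono_left nhdsWithin_le_nhds
    have h2 : Tendsto K (nhdsWithin 0 (Iio 0)) (nhds 0) := by
      refine Tendsto.congr' ?_ tendsto_const_nhds
      filter_upwards [self_mem_nhdsWithin] with x hx
      exact (hK0 x hx).symm
    exact tendsto_nhds_unique h1 h2
  have hKz : ∀ u : ℝ, u ∉ Ioi (0:ℝ) → K u = 0 := by
    intro u hu
    have hu' : u ≤ 0 := le_of_not_gt (by simpa [mem_Ioi] using hu)
    rcases lt_or_eq_of_le hu' with h | h
    · exact hK0 u h
    · rw [h]; exact hK00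
  have hKb' : ∀ u : ℝ, |K u| ≤ C * Real.exp (u / 2) := by
    intro u
    rcases le_or_gt 0 u with h | h
    · exact hKb u h
    · rw [hK0 u h]; simp only [abs_zero]; positivity
  have hfm : AEStronglyMeasurable f (volume.restrict (Iio t)) := hf.aestronglyMeasurable
  -- integrability of exponentials on (-∞, t)
  have hexpc : ∀ c : ℝ, 0 < c → IntegrableOn (fun y => Real.exp (c * y)) (Iio t) := by
    intro c hc
    have A : MeasurableEmbedding (Neg.neg : ℝ → ℝ) :=
      (Homeomorph.neg ℝ).isClosedEmbedding.measurableEmbedding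
    have hmap : (volume.restrict (Ioi (-t))).map (Neg.neg : ℝ → ℝ) = volume.restrict (Iio t) := by
      have hpre : (Neg.neg : ℝ → ℝ) ⁻¹' (Iio t) = Ioi (-t) := by
        ext x
        simp only [mem_preimage, mem_Iio, mem_Ioi]
        constructor <;> intro h <;> linarith
      have h := Measure.restrict_map (μ := (volume : Measure ℝ)) A.measurable
        (s := Iio t) measurableSet_Iio
      rw [hpre, Measure.map_neg_eq_self (volume : Measure ℝ)] at h
      exact h.symm
    have h1 : IntegrableOn (fun x => Real.exp (-c * x)) (Ioi (-t)) :=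
      exp_neg_integrableOn_Ioi _ hc
    have h2 : Integrable (fun y => Real.exp (c * y))
        ((volume.restrict (Ioi (-t))).map (Neg.neg : ℝ → ℝ)) := by
      rw [A.integrable_map_iff]
      refine h1.congr (Eventually.of_forall fun x => ?_)
      simp only [Function.comp]
      congr 1; ring
    rw [hmap] at h2
    exact h2
  have hexpL2 : ∀ c : ℝ, 0 < c →
      MemLp (fun y => Real.exp (c * y)) 2 (volume.restrict (Iio t)) := by
    intro c hc
    have hm : AEStronglyMeasurable (fun y : ℝ => Real.exp (c * y))
        (volume.restrict (Iio t)) := Continuous.aestronglyMeasurable (by continuity)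
    refine (memLp_two_iff_integrable_sq hm).2 ?_
    refine (hexpc (2 * c) (by positivity)).congr (Eventually.of_forall fun y => ?_)
    show Real.exp (2 * c * y) = Real.exp (c * y) ^ 2
    rw [sq, ← Real.exp_add]
    congr 1
    ring
  have habs : MemLp (fun y => |f y|) 2 (volume.restrict (Iio t)) := by
    simpa [Real.norm_eq_abs] using hf.norm
  -- g(y) = e^{cy} |f(y)| is integrable on (-∞,t) for c > 0
  have hgen : ∀ c : ℝ, 0 < c →
      Integrable (fun y => Real.exp (c * y) * |f y|) (volume.restrict (Iio t)) := by
    intro c hc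
    have hsm := habs.smul (hexpL2 c hc) (r := 1)
      (hpqr := ⟨by rw [inv_one]; exact ENNReal.inv_two_add_inv_two⟩)
    exact (memLp_one_iff_integrable.mp hsm).congr
      (Eventually.of_forall fun y => by simp [Pi.smul_apply, smul_eq_mul])
  have hgabs : Integrable (fun y => Real.exp (y / 2) * |f y|) (volume.restrict (Iio t)) := by
    have h := hgen (1/2) (by norm_num)
    simp only [show ∀ y : ℝ, (1:ℝ)/2 * y = y / 2 from fun y => by ring] at h
    exact h
  -- key pointwise bound
  have hbound : ∀ x y : ℝ,
      |K (x + y) * f y| ≤ C * Real.exp (x / 2) * (Real.exp (y / 2) * |f y|) := by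
    intro x y
    rw [abs_mul]
    have hsplit : Real.exp ((x + y) / 2) = Real.exp (x / 2) * Real.exp (y / 2) := by
      rw [← Real.exp_add]; ring_nf
    calc |K (x + y)| * |f y| ≤ (C * Real.exp ((x + y) / 2)) * |f y| :=
          mul_le_mul_of_nonneg_right (hKb' (x + y)) (abs_nonneg _)
      _ = C * Real.exp (x / 2) * (Real.exp (y / 2) * |f y|) := by rw [hsplit]; ring
  -- part 1
  have part1 : ∀ x : ℝ, IntegrableOn (fun y => K (x + y) * f y) (Iio t) := by
    intro x
    refine (hgabs.const_mul (C * Real.exp (x / 2))).mono'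
      (((hKc.comp (continuous_const.add continuous_id)).aestronglyMeasurable).mul hfm) ?_
    filter_upwards with y
    rw [Real.norm_eq_abs]
    exact hbound x y
  refine ⟨part1, ?_, ?_, ?_⟩
  -- part 2
  · intro x hx
    have hz : ∀ y ∈ Iio t, K (x + y) * f y = (fun _ : ℝ => (0:ℝ)) y := by
      intro y hy
      rw [hK0 (x + y) (by simp only [mem_Iio] at hy; linarith), zero_mul]
    rw [setIntegral_congr_fun measurableSet_Iio hz, integral_const, smul_zero]
  -- part 3
  · refine ⟨C * ∫ y in Iio t, Real.exp (y / 2) * |f y|, fun x => ?_⟩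
    have h1 : |∫ y in Iio t, K (x + y) * f y| ≤ ∫ y in Iio t, |K (x + y) * f y| := by
      simpa only [Real.norm_eq_abs] using
        norm_integral_le_integral_norm (μ := volume.restrict (Iio t))
          (fun y => K (x + y) * f y)
    have h2 : ∫ y in Iio t, |K (x + y) * f y|
        ≤ ∫ y in Iio t, C * Real.exp (x / 2) * (Real.exp (y / 2) * |f y|) :=
      integral_mono (part1 x).abs (hgabs.const_mul _) (fun y => hbound x y)
    have h3 : ∫ y in Iio t, C * Real.exp (x / 2) * (Real.exp (y / 2) * |f y|)
        = C * Real.exp (x / 2) * ∫ y in Iio t, Real.exp (y / 2) * |f y| :=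
      integral_const_mul _ _
    calc |∫ y in Iio t, K (x + y) * f y|
        ≤ C * Real.exp (x / 2) * ∫ y in Iio t, Real.exp (y / 2) * |f y| :=
          h1.trans (h2.trans_eq h3)
      _ = (C * ∫ y in Iio t, Real.exp (y / 2) * |f y|) * Real.exp (x / 2) := by ring
  -- part 4
  · intro z hz
    have hb : (1:ℝ)/2 < z.im := hz
    -- norms of the exponentials
    have he1 : ∀ x : ℝ, ‖Complex.exp (Complex.I * z * x)‖ = Real.exp (-z.im * x) := by
      intro x
      rw [Complex.norm_exp]
      congr 1
      simp [Complex.mul_re]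
    have he2 : ∀ y : ℝ, ‖Complex.exp (-Complex.I * z * y)‖ = Real.exp (z.im * y) := by
      intro y
      rw [Complex.norm_exp]
      congr 1
      simp [Complex.mul_re]
    -- the function φ and its full-line integral
    set E : ℂ := Complex.exp (-2 * θ *
      (deriv xi (1/2 - Complex.I * z) / xi (1/2 - Complex.I * z))) with hE
    set φ : ℝ → ℂ := fun u => (K u : ℂ) * Complex.exp (Complex.I * z * u) with hφ
    have hφ0 : ∀ u : ℝ, u ∉ Ioi (0:ℝ) → φ u = 0 := by
      intro u hu
      simp [hφ, hKz u hu]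
    have hφE : ∫ u : ℝ, φ u = E := by
      rw [← setIntegral_eq_integral_of_forall_compl_eq_zero hφ0]
      exact hFT z hz
    -- inner x-integral
    have hinner : ∀ y : ℝ, y < t →
        ∫ x in Ioi (-t), ((K (x + y) : ℝ) : ℂ) * Complex.exp (Complex.I * z * x)
          = Complex.exp (-Complex.I * z * y) * E := by
      intro y hy
      have hψ : ∀ x : ℝ, ((K (x + y) : ℝ) : ℂ) * Complex.exp (Complex.I * z * x)
          = φ (x + y) * Complex.exp (-Complex.I * z * y) := by
        intro x
        have hexp : Complex.exp (Complex.I * z * ((x : ℂ) + (y : ℂ)))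
            * Complex.exp (-Complex.I * z * (y : ℂ)) = Complex.exp (Complex.I * z * (x : ℂ)) := by
          rw [← Complex.exp_add]
          congr 1
          ring
        simp only [hφ, Complex.ofReal_add]
        rw [mul_assoc ((K (x + y) : ℂ)) (Complex.exp (Complex.I * z * ((x : ℂ) + (y : ℂ))))
          (Complex.exp (-Complex.I * z * (y : ℂ))), hexp]
      have h0 : ∀ x : ℝ, x ∉ Ioi (-t) →
          φ (x + y) * Complex.exp (-Complex.I * z * y) = 0 := by
        intro x hx
        have hxy : x + y < 0 := by
          have : x ≤ -t := le_of_not_gt hx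
          linarith
        simp [hφ, hK0 _ hxy]
      calc ∫ x in Ioi (-t), ((K (x + y) : ℝ) : ℂ) * Complex.exp (Complex.I * z * x)
          = ∫ x in Ioi (-t), φ (x + y) * Complex.exp (-Complex.I * z * y) :=
            setIntegral_congr_fun measurableSet_Ioi (fun x _ => hψ x)
        _ = ∫ x : ℝ, φ (x + y) * Complex.exp (-Complex.I * z * y) :=
            setIntegral_eq_integral_of_forall_compl_eq_zero h0
        _ = (∫ x : ℝ, φ (x + y)) * Complex.exp (-Complex.I * z * y) :=
            integral_mul_const _ _
        _ = (∫ u : ℝ, φ u) * Complex.exp (-Complex.I * z * y) := by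
            rw [integral_add_right_eq_self φ y]
        _ = Complex.exp (-Complex.I * z * y) * E := by rw [hφE]; ring
    -- claim (b)
    have hgb : Integrable (fun y => Real.exp (z.im * y) * |f y|) (volume.restrict (Iio t)) :=
      hgen z.im (by linarith)
    have hclaimb : Integrable (fun y : ℝ => (f y : ℂ) * Complex.exp (-Complex.I * z * y))
        (volume.restrict (Iio t)) := by
      refine hgb.mono' ?_ ?_
      · exact (Complex.continuous_ofReal.comp_aestronglyMeasurable hfm).mul
          (Complex.continuous_exp.comp
            (continuous_const.mul Complex.continuous_ofReal)).aestronglyMeasurable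
      · filter_upwards with y
        rw [norm_mul, he2 y, Complex.norm_real, Real.norm_eq_abs]
        exact le_of_eq (by ring)
    -- integrability of the exponential factor in x
    have hExpX : IntegrableOn (fun x : ℝ => Real.exp ((1/2 - z.im) * x)) (Ioi (-t)) := by
      refine (exp_neg_integrableOn_Ioi (-t) (show 0 < z.im - 1/2 by linarith)).congr
        (Eventually.of_forall fun x => ?_)
      show Real.exp (-(z.im - 1/2) * x) = Real.exp ((1/2 - z.im) * x)
      rw [show -(z.im - 1/2) * x = (1/2 - z.im) * x by ring]
    -- product integrability
    have hProd : Integrable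
        (fun p : ℝ × ℝ => ((K (p.1 + p.2) * f p.2 : ℝ) : ℂ) * Complex.exp (Complex.I * z * p.1))
        ((volume.restrict (Ioi (-t))).prod (volume.restrict (Iio t))) := by
      have hdom : Integrable
          (fun p : ℝ × ℝ => (C * Real.exp ((1/2 - z.im) * p.1)) * (Real.exp (p.2 / 2) * |f p.2|))
          ((volume.restrict (Ioi (-t))).prod (volume.restrict (Iio t))) :=
        (hExpX.const_mul C).mul_prod hgabs
      refine hdom.mono' ?_ ?_
      · have m1 : AEStronglyMeasurable (fun p : ℝ × ℝ => ((K (p.1 + p.2) : ℝ) : ℂ))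
            ((volume.restrict (Ioi (-t))).prod (volume.restrict (Iio t))) :=
          (Complex.continuous_ofReal.comp
            (hKc.comp (continuous_fst.add continuous_snd))).aestronglyMeasurable
        have m2 : AEStronglyMeasurable (fun p : ℝ × ℝ => ((f p.2 : ℝ) : ℂ))
            ((volume.restrict (Ioi (-t))).prod (volume.restrict (Iio t))) :=
          Complex.continuous_ofReal.comp_aestronglyMeasurable hfm.comp_snd
        have m3 : AEStronglyMeasurable (fun p : ℝ × ℝ => Complex.exp (Complex.I * z * p.1))
            ((volume.restrict (Ioi (-t))).prod (volume.restrict (Iio t))) :=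
          (Complex.continuous_exp.comp (continuous_const.mul
            (Complex.continuous_ofReal.comp continuous_fst))).aestronglyMeasurable
        exact ((m1.mul m2).mul m3).congr
          (Eventually.of_forall fun p => by simp only [Pi.mul_apply]; push_cast; ring)
      · filter_upwards with p
        rw [norm_mul, he1 p.1, Complex.norm_real, Real.norm_eq_abs]
        have hsplit : Real.exp ((1/2 - z.im) * p.1)
            = Real.exp (p.1 / 2) * Real.exp (-z.im * p.1) := by
          rw [← Real.exp_add]; ring_nf
        calc |K (p.1 + p.2) * f p.2| * Real.exp (-z.im * p.1)
            ≤ (C * Real.exp (p.1 / 2) * (Real.exp (p.2 / 2) * |f p.2|)) * Real.exp (-z.im * p.1) :=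
              mul_le_mul_of_nonneg_right (hbound p.1 p.2) (Real.exp_pos _).le
          _ = (C * Real.exp ((1/2 - z.im) * p.1)) * (Real.exp (p.2 / 2) * |f p.2|) := by
              rw [hsplit]; ring
    -- rewriting the outer integrand
    have hFx : ∀ x : ℝ,
        (∫ y in Iio t, ((K (x + y) * f y : ℝ) : ℂ) * Complex.exp (Complex.I * z * x))
          = ((∫ y in Iio t, K (x + y) * f y : ℝ) : ℂ) * Complex.exp (Complex.I * z * x) := by
      intro x
      rw [integral_mul_const]
      exact congrArg (fun w : ℂ => w * Complex.exp (Complex.I * z * x)) integral_ofReal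
    -- claim (a)
    have hclaima : IntegrableOn (fun x : ℝ =>
        ((∫ y in Iio t, K (x + y) * f y : ℝ) : ℂ) * Complex.exp (Complex.I * z * x))
        (Ioi (-t)) := by
      have h := hProd.integral_prod_left
      exact h.congr (Eventually.of_forall fun x => hFx x)
    refine ⟨hclaima, hclaimb, ?_⟩
    calc ∫ x in Ioi (-t),
            ((∫ y in Iio t, K (x + y) * f y : ℝ) : ℂ) * Complex.exp (Complex.I * z * x)
        = ∫ x in Ioi (-t), ∫ y in Iio t,
            ((K (x + y) * f y : ℝ) : ℂ) * Complex.exp (Complex.I * z * x) :=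
          integral_congr_ae (Eventually.of_forall fun x => (hFx x).symm)
      _ = ∫ y in Iio t, ∫ x in Ioi (-t),
            ((K (x + y) * f y : ℝ) : ℂ) * Complex.exp (Complex.I * z * x) :=
          integral_integral_swap hProd
      _ = ∫ y in Iio t, (f y : ℂ) * Complex.exp (-Complex.I * z * y) * E := by
          refine setIntegral_congr_fun measurableSet_Iio fun y hy => ?_
          have hpt : ∀ x : ℝ, ((K (x + y) * f y : ℝ) : ℂ) * Complex.exp (Complex.I * z * x)
              = (f y : ℂ) * (((K (x + y) : ℝ) : ℂ) * Complex.exp (Complex.I * z * x)) := by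
            intro x; push_cast; ring
          calc ∫ x in Ioi (-t), ((K (x + y) * f y : ℝ) : ℂ) * Complex.exp (Complex.I * z * x)
              = ∫ x in Ioi (-t),
                  (f y : ℂ) * (((K (x + y) : ℝ) : ℂ) * Complex.exp (Complex.I * z * x)) :=
                integral_congr_ae (Eventually.of_forall hpt)
            _ = (f y : ℂ) * ∫ x in Ioi (-t),
                  ((K (x + y) : ℝ) : ℂ) * Complex.exp (Complex.I * z * x) :=
                integral_const_mul _ _
            _ = (f y : ℂ) * (Complex.exp (-Complex.I * z * y) * E) := by
                rw [hinner y (mem_Iio.mp hy)]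
            _ = (f y : ℂ) * Complex.exp (-Complex.I * z * y) * E := by ring
      _ = (∫ y in Iio t, (f y : ℂ) * Complex.exp (-Complex.I * z * y)) * E :=
          integral_mul_const _ _
      _ = E * ∫ y in Iio t, (f y : ℂ) * Complex.exp (-Complex.I * z * y) := mul_comm _ _
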